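/- Let R be a commutative ring, let p ≥ 1 and y_1,…,y_p ∈ R, and let i be an integer with 1 ≤ i ≤ p. Then i! · e_i(y_1,…,y_p) = Σ_{λ ⊢ i} (−1)^{i−ℓ(λ)} · (i! / ∏_{k≥1} k^{r_k} r_k!) · ∏_{k≥1} (y_1^k + ⋯ + y_p^k)^{r_k}, where the sum ranges over all integer partitions λ = (1^{r_1} 2^{r_2} ⋯) of i (so i = r_1 + 2r_2 + ⋯), ℓ(λ) = r_1 + r_2 + ⋯ is the number of parts of λ, and i!/∏_k k^{r_k} r_k! is an integer (the number of permutations of {1,…,i} with cycle type λ). -/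

import Mathlib

open Finset

namespace Stmt1Aux

/-- `zc s = (∏ parts) * ∏ (multiplicities)!`, i.e. `z_λ`. -/
def zc (s : Multiset ℕ) : ℕ := s.prod * ∏ k ∈ s.toFinset, (s.count k).factorial

lemma zc_pos {s : Multiset ℕ} (h : ∀ x ∈ s, 0 < x) : 0 < zc s := by
  apply Nat.mul_pos
  · exact CanonicallyOrderedAdd.multiset_prod_pos.2 h
  · exact Finset.prod_pos fun k _ => Nat.factorial_pos _

lemma zc_cons (k : ℕ) (t : Multiset ℕ) :
    zc (k ::ₘ t) = (k * (t.count k + 1)) * zc t := by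
  classical
  have h1 : (∏ j ∈ (k ::ₘ t).toFinset, ((k ::ₘ t).count j).factorial)
      = (t.count k + 1).factorial * ∏ j ∈ t.toFinset.erase k, (t.count j).factorial := by
    rw [Multiset.toFinset_cons,
      ← Finset.mul_prod_erase _ _ (Finset.mem_insert_self k t.toFinset),
      Finset.erase_insert_eq_erase, Multiset.count_cons_self]
    congr 1
    refine Finset.prod_congr rfl fun j hj => ?_
    rw [Multiset.count_cons_of_ne (Finset.ne_of_mem_erase hj)]
  have h2 : (∏ j ∈ t.toFinset, (t.count j).factorial)
      = (t.count k).factorial * ∏ j ∈ t.toFinset.erase k, (t.count j).factorial := by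
    by_cases hk : k ∈ t.toFinset
    · rw [← Finset.mul_prod_erase _ _ hk]
    · rw [Finset.erase_eq_of_notMem hk,
        Multiset.count_eq_zero.2 fun h => hk (Multiset.mem_toFinset.2 h)]
      simp
  unfold zc
  rw [Multiset.prod_cons, h1, h2, Nat.factorial_succ]
  ring

lemma zc_erase {s : Multiset ℕ} {k : ℕ} (h : k ∈ s) :
    zc s = (k * s.count k) * zc (s.erase k) := by
  conv_lhs => rw [← Multiset.cons_erase h]
  rw [zc_cons]
  have : (s.erase k).count k + 1 = s.count k := by
    have hc : 0 < s.count k := Multiset.count_pos.2 h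
    rw [Multiset.count_erase_self]; omega
  rw [this]

lemma pow_mul_factorial_dvd (k : ℕ) (hk : 0 < k) :
    ∀ c : ℕ, k ^ c * c.factorial ∣ (k * c).factorial
  | 0 => by simp
  | (c + 1) => by
    have ih := pow_mul_factorial_dvd k hk c
    have hm : k * (c + 1) = k * c + k := by ring
    have h1 : (k * c).factorial * (k * (c + 1)) ∣ (k * (c + 1)).factorial := by
      have h0 : 0 < k * (c + 1) := by positivity
      calc (k * c).factorial * (k * (c + 1))
          ∣ (k * (c + 1) - 1).factorial * (k * (c + 1)) :=
            mul_dvd_mul_right (Nat.factorial_dvd_factorial (by omega)) _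
        _ = (k * (c + 1)).factorial := by
            rw [mul_comm, Nat.mul_factorial_pred h0.ne']
    calc k ^ (c + 1) * (c + 1).factorial
        = (k ^ c * c.factorial) * (k * (c + 1)) := by
          rw [Nat.factorial_succ]; ring
      _ ∣ (k * c).factorial * (k * (c + 1)) := mul_dvd_mul_right ih _
      _ ∣ (k * (c + 1)).factorial := h1

lemma zc_dvd (s : Multiset ℕ) (h : ∀ x ∈ s, 0 < x) : zc s ∣ s.sum.factorial := by
  classical
  have h1 : zc s = ∏ k ∈ s.toFinset, (k ^ s.count k * (s.count k).factorial) := by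
    rw [zc, Finset.prod_mul_distrib, ← Finset.prod_multiset_count]
  have h2 : zc s ∣ ∏ k ∈ s.toFinset, (k * s.count k).factorial := by
    rw [h1]
    exact Finset.prod_dvd_prod_of_dvd _ _ fun k hk =>
      pow_mul_factorial_dvd k (h k (Multiset.mem_toFinset.1 hk)) _
  refine h2.trans ?_
  have h3 : s.sum = ∑ k ∈ s.toFinset, k * s.count k := by
    rw [Finset.sum_multiset_count]
    exact Finset.sum_congr rfl fun k _ => by rw [smul_eq_mul, mul_comm]
  rw [h3]
  exact Nat.prod_factorial_dvd_factorial_sum _ _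

lemma card_le_sum (s : Multiset ℕ) (h : ∀ x ∈ s, 0 < x) :
    Multiset.card s ≤ s.sum := by
  induction s using Multiset.induction with
  | empty => simp
  | cons a t ih =>
    rw [Multiset.card_cons, Multiset.sum_cons]
    have ha : 0 < a := h a (Multiset.mem_cons_self a t)
    have := ih fun x hx => h x (Multiset.mem_cons_of_mem hx)
    omega

lemma coeff_rec (s : Multiset ℕ) (h : ∀ x ∈ s, 0 < x) (hne : s ≠ 0) :
    s.sum.factorial / zc s
      = ∑ k ∈ s.toFinset,
          (s.sum - 1).descFactorial (k - 1) * ((s.sum - k).factorial / zc (s.erase k)) := by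
  classical
  set n := s.sum with hn
  have hn1 : 1 ≤ n := by
    obtain ⟨x, hx⟩ := Multiset.exists_mem_of_ne_zero hne
    calc 1 ≤ x := h x hx
      _ ≤ n := Multiset.single_le_sum (fun y _ => Nat.zero_le y) x hx
  refine Nat.eq_of_mul_eq_mul_right (zc_pos h) ?_
  rw [Nat.div_mul_cancel (zc_dvd s h), Finset.sum_mul]
  have key : ∀ k ∈ s.toFinset,
      (n - 1).descFactorial (k - 1) * ((n - k).factorial / zc (s.erase k)) * zc s
        = (n - 1).factorial * (k * s.count k) := by
    intro k hk
    have hks : k ∈ s := Multiset.mem_toFinset.1 hk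
    have hk1 : 1 ≤ k := h k hks
    have hkn : k ≤ n := Multiset.single_le_sum (fun y _ => Nat.zero_le y) k hks
    have hesum : (s.erase k).sum = n - k := by
      have h2 : k + (s.erase k).sum = n := by
        rw [← Multiset.sum_cons, Multiset.cons_erase hks]
      omega
    have hepos : ∀ x ∈ s.erase k, 0 < x := fun x hx => h x (Multiset.mem_of_mem_erase hx)
    have hdvd : zc (s.erase k) ∣ (n - k).factorial := by
      rw [← hesum]; exact zc_dvd _ hepos
    have hDF : (n - k).factorial * (n - 1).descFactorial (k - 1) = (n - 1).factorial := by
      have h3 := Nat.factorial_mul_descFactorial (n := n - 1) (k := k - 1) (by omega)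
      rwa [show n - 1 - (k - 1) = n - k by omega] at h3
    calc (n - 1).descFactorial (k - 1) * ((n - k).factorial / zc (s.erase k)) * zc s
        = (n - 1).descFactorial (k - 1) * ((n - k).factorial / zc (s.erase k))
            * ((k * s.count k) * zc (s.erase k)) := by rw [← zc_erase hks]
      _ = ((n - k).factorial / zc (s.erase k) * zc (s.erase k))
            * (n - 1).descFactorial (k - 1) * (k * s.count k) := by ring
      _ = (n - k).factorial * (n - 1).descFactorial (k - 1) * (k * s.count k) := by
            rw [Nat.div_mul_cancel hdvd]
      _ = (n - 1).factorial * (k * s.count k) := by rw [hDF]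
  rw [Finset.sum_congr rfl key, ← Finset.mul_sum]
  have hsum : ∑ k ∈ s.toFinset, k * s.count k = n := by
    rw [hn, Finset.sum_multiset_count]
    exact Finset.sum_congr rfl fun k _ => by rw [smul_eq_mul, mul_comm]
  rw [hsum, mul_comm, Nat.mul_factorial_pred (by omega)]

variable {R : Type*} [CommRing R] {p : ℕ}

def P (y : Fin p → R) (k : ℕ) : R := ∑ j, y j ^ k

def E (y : Fin p → R) (i : ℕ) : R :=
  ∑ J ∈ Finset.powersetCard i (Finset.univ : Finset (Fin p)), ∏ j ∈ J, y j


theorem newton (y : Fin p → R) (i : ℕ) :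
    (i : R) * E y i = (-1) ^ (i + 1) *
      ∑ a ∈ (Finset.HasAntidiagonal.antidiagonal i).filter (fun a => a.1 < i),
        (-1) ^ a.1 * E y a.1 * P y a.2 := by
  have h := congrArg (MvPolynomial.aeval y) (MvPolynomial.mul_esymm_eq_sum (Fin p) R i)
  simp only [map_mul, map_natCast, map_sum, map_pow, map_neg, map_one,
    MvPolynomial.aeval_esymm_eq_multiset_esymm, Finset.esymm_map_val,
    MvPolynomial.psum, MvPolynomial.aeval_X] at h
  convert h using 2
  all_goals rfl

lemma sign_eq {R : Type*} [CommRing R] {i k l : ℕ} (hk1 : 1 ≤ k) (hki : k ≤ i)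
    (hl : 1 ≤ l) (hle : l - 1 ≤ i - k) :
    (-1 : R) ^ (i + 1) * (-1 : R) ^ (i - k) * (-1 : R) ^ ((i - k) - (l - 1))
      = (-1 : R) ^ (i - l) := by
  rw [← pow_add, ← pow_add,
    show (i + 1) + (i - k) + ((i - k) - (l - 1)) = (i - l) + 2 * ((i - k) + 1)
      by omega,
    pow_add, pow_mul, neg_one_sq, one_pow, mul_one]

/-- removing one part -/
def eraseSig (i : ℕ) : (Σ _ : Nat.Partition i, ℕ) → (Σ k : ℕ, Nat.Partition (i - k)) :=
  fun x =>
    ⟨x.2,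
      if h : x.2 ∈ x.1.parts then
        ⟨x.1.parts.erase x.2,
          fun hj => x.1.parts_pos (Multiset.mem_of_mem_erase hj),
          by
            have h2 : x.2 + (x.1.parts.erase x.2).sum = i := by
              rw [← Multiset.sum_cons, Multiset.cons_erase h, x.1.parts_sum]
            omega⟩
      else default⟩

/-- adding one part -/
def consSig (i : ℕ) : (Σ k : ℕ, Nat.Partition (i - k)) → (Σ _ : Nat.Partition i, ℕ) :=
  fun x =>
    ⟨if h : 1 ≤ x.1 ∧ x.1 ≤ i then
      ⟨x.1 ::ₘ x.2.parts,
        fun hj => by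
          rcases Multiset.mem_cons.1 hj with h1 | h1
          · omega
          · exact x.2.parts_pos h1,
        by rw [Multiset.sum_cons, x.2.parts_sum]; omega⟩
    else default, x.1⟩

def fA (y : Fin p → R) (i : ℕ) : (Σ _ : Nat.Partition i, ℕ) → R := fun x =>
  (-1 : R) ^ (i - Multiset.card x.1.parts) *
    (((i - 1).descFactorial (x.2 - 1)
        * ((i - x.2).factorial / zc (x.1.parts.erase x.2)) : ℕ) : R) *
    (P y x.2 * ((x.1.parts.erase x.2).map (P y)).prod)

def fB (y : Fin p → R) (i : ℕ) : (Σ k : ℕ, Nat.Partition (i - k)) → R := fun x =>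
  (-1 : R) ^ (i + 1) * (-1 : R) ^ (i - x.1) * (((i - 1).descFactorial (x.1 - 1) : ℕ) : R)
    * P y x.1 *
    ((-1 : R) ^ ((i - x.1) - Multiset.card x.2.parts) *
      (((i - x.1).factorial / zc x.2.parts : ℕ) : R) * (x.2.parts.map (P y)).prod)

lemma main (y : Fin p → R) : ∀ i : ℕ,
    (i.factorial : R) * E y i =
      ∑ lam : Nat.Partition i,
        (-1 : R) ^ (i - Multiset.card lam.parts) *
          ((i.factorial / zc lam.parts : ℕ) : R) * (lam.parts.map (P y)).prod := by
  intro i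
  induction i using Nat.strong_induction_on with
  | _ i ih =>
  rcases Nat.eq_zero_or_pos i with rfl | hi1
  · -- base case
    rw [Fintype.sum_unique]
    have hparts : (default : Nat.Partition 0).parts = 0 := rfl
    rw [hparts]
    simp [E, zc]
  · -- inductive step
    classical
    -- Step 1: Newton + reindexing
    have hstep1 : (i.factorial : R) * E y i
        = ∑ k ∈ Finset.Icc 1 i, ((i - 1).factorial : R) * (-1 : R) ^ (i + 1) *
            ((-1 : R) ^ (i - k) * E y (i - k) * P y k) := by
      have h0 : (i.factorial : R) * E y i = ((i - 1).factorial : R) * ((i : R) * E y i) := by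
        rw [← mul_assoc, ← Nat.cast_mul, mul_comm ((i - 1).factorial) i,
          Nat.mul_factorial_pred hi1.ne']
      rw [h0, newton y i, ← mul_assoc, Finset.mul_sum]
      refine Finset.sum_nbij' (fun a => a.2) (fun k => (i - k, k)) ?_ ?_ ?_ ?_ ?_
      · intro a ha
        simp only [Finset.mem_filter, Finset.HasAntidiagonal.mem_antidiagonal] at ha
        simp only [Finset.mem_Icc]
        omega
      · intro k hk
        simp only [Finset.mem_Icc] at hk
        simp only [Finset.mem_filter, Finset.HasAntidiagonal.mem_antidiagonal]
        omega
      · intro a ha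
        simp only [Finset.mem_filter, Finset.HasAntidiagonal.mem_antidiagonal] at ha
        have : i - a.2 = a.1 := by omega
        rw [Prod.ext_iff]
        exact ⟨this, rfl⟩
      · intro k _; rfl
      · intro a ha
        simp only [Finset.mem_filter, Finset.HasAntidiagonal.mem_antidiagonal] at ha
        have h1 : i - a.2 = a.1 := by omega
        rw [h1]
    -- Step 2: apply induction hypothesis
    have hstep2 : ∀ k ∈ Finset.Icc 1 i,
        ((i - 1).factorial : R) * (-1 : R) ^ (i + 1) *
            ((-1 : R) ^ (i - k) * E y (i - k) * P y k)
          = ∑ mu : Nat.Partition (i - k), fB y i ⟨k, mu⟩ := by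
      intro k hk
      simp only [Finset.mem_Icc] at hk
      have hfact : ((i - 1).factorial : ℕ)
          = (i - k).factorial * (i - 1).descFactorial (k - 1) := by
        have h3 := Nat.factorial_mul_descFactorial (n := i - 1) (k := k - 1) (by omega)
        rw [show i - 1 - (k - 1) = i - k by omega] at h3
        exact h3.symm
      have hih := ih (i - k) (by omega)
      calc ((i - 1).factorial : R) * (-1 : R) ^ (i + 1) *
              ((-1 : R) ^ (i - k) * E y (i - k) * P y k)
          = (-1 : R) ^ (i + 1) * (-1 : R) ^ (i - k)
              * (((i - 1).descFactorial (k - 1) : ℕ) : R) * P y k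
              * (((i - k).factorial : R) * E y (i - k)) := by
            rw [hfact]; push_cast; ring
        _ = (-1 : R) ^ (i + 1) * (-1 : R) ^ (i - k)
              * (((i - 1).descFactorial (k - 1) : ℕ) : R) * P y k
              * (∑ mu : Nat.Partition (i - k),
                  (-1 : R) ^ ((i - k) - Multiset.card mu.parts) *
                    (((i - k).factorial / zc mu.parts : ℕ) : R)
                    * (mu.parts.map (P y)).prod) := by rw [hih]
        _ = ∑ mu : Nat.Partition (i - k), fB y i ⟨k, mu⟩ := by
            rw [Finset.mul_sum]
            rfl
    -- Step 3: RHS as a sigma sum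
    have hRHS : (∑ lam : Nat.Partition i, (-1 : R) ^ (i - Multiset.card lam.parts) *
          ((i.factorial / zc lam.parts : ℕ) : R) * (lam.parts.map (P y)).prod)
        = ∑ x ∈ (Finset.univ : Finset (Nat.Partition i)).sigma (fun lam => lam.parts.toFinset),
            fA y i x := by
      rw [Finset.sum_sigma]
      refine Finset.sum_congr rfl fun lam _ => ?_
      have hpos : ∀ x ∈ lam.parts, 0 < x := fun x hx => lam.parts_pos hx
      have hne : lam.parts ≠ 0 := by
        intro h0
        have h4 := lam.parts_sum
        rw [h0, Multiset.sum_zero] at h4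
        omega
      have h1 : i.factorial / zc lam.parts
          = ∑ k ∈ lam.parts.toFinset,
              (i - 1).descFactorial (k - 1)
                * ((i - k).factorial / zc (lam.parts.erase k)) := by
        have h5 := coeff_rec lam.parts hpos hne
        rw [lam.parts_sum] at h5
        exact h5
      rw [h1, Nat.cast_sum, Finset.mul_sum, Finset.sum_mul]
      refine Finset.sum_congr rfl fun k hk => ?_
      have hks : k ∈ lam.parts := Multiset.mem_toFinset.1 hk
      have hmap : (lam.parts.map (P y)).prod
          = P y k * ((lam.parts.erase k).map (P y)).prod := by
        conv_lhs => rw [← Multiset.cons_erase hks, Multiset.map_cons, Multiset.prod_cons]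
      simp only [fA]
      rw [hmap]
    -- Step 4: the bijection between the two sigma sums
    have hAB : (∑ x ∈ (Finset.univ : Finset (Nat.Partition i)).sigma
            (fun lam => lam.parts.toFinset), fA y i x)
        = ∑ x ∈ (Finset.Icc 1 i).sigma
            (fun k => (Finset.univ : Finset (Nat.Partition (i - k)))), fB y i x := by
      refine Finset.sum_nbij' (eraseSig i) (consSig i) ?_ ?_ ?_ ?_ ?_
      · rintro ⟨lam, k⟩ ha
        simp only [Finset.mem_sigma, Finset.mem_univ, true_and, Multiset.mem_toFinset] at ha
        have hk1 : 1 ≤ k := lam.parts_pos ha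
        have hki : k ≤ i := by
          have := Multiset.single_le_sum (fun y _ => Nat.zero_le y) k ha
          rwa [lam.parts_sum] at this
        simp only [eraseSig, Finset.mem_sigma, Finset.mem_Icc, Finset.mem_univ, and_true]
        omega
      · rintro ⟨k, mu⟩ hb
        simp only [Finset.mem_sigma, Finset.mem_Icc, Finset.mem_univ, and_true] at hb
        simp only [consSig, dif_pos hb, Finset.mem_sigma, Finset.mem_univ, true_and,
          Multiset.mem_toFinset]
        exact Multiset.mem_cons_self k mu.parts
      · rintro ⟨lam, k⟩ ha
        simp only [Finset.mem_sigma, Finset.mem_univ, true_and, Multiset.mem_toFinset] at ha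
        have hk1 : 1 ≤ k := lam.parts_pos ha
        have hki : k ≤ i := by
          have := Multiset.single_le_sum (fun y _ => Nat.zero_le y) k ha
          rwa [lam.parts_sum] at this
        simp only [eraseSig, dif_pos ha, consSig, dif_pos (⟨hk1, hki⟩ : 1 ≤ k ∧ k ≤ i)]
        apply Sigma.ext
        · exact Nat.Partition.ext (Multiset.cons_erase ha)
        · rfl
      · rintro ⟨k, mu⟩ hb
        simp only [Finset.mem_sigma, Finset.mem_Icc, Finset.mem_univ, and_true] at hb
        simp only [consSig, eraseSig, dif_pos hb, dif_pos (Multiset.mem_cons_self k mu.parts)]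
        apply Sigma.ext
        · rfl
        · exact heq_of_eq (Nat.Partition.ext (Multiset.erase_cons_head k mu.parts))
      · rintro ⟨lam, k⟩ ha
        simp only [Finset.mem_sigma, Finset.mem_univ, true_and, Multiset.mem_toFinset] at ha
        have hk1 : 1 ≤ k := lam.parts_pos ha
        have hki : k ≤ i := by
          have := Multiset.single_le_sum (fun y _ => Nat.zero_le y) k ha
          rwa [lam.parts_sum] at this
        have hl1 : 1 ≤ Multiset.card lam.parts := by
          rw [Nat.one_le_iff_ne_zero, Ne, Multiset.card_eq_zero]
          intro h0
          rw [h0] at ha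
          exact absurd ha (Multiset.notMem_zero k)
        have hesum : (lam.parts.erase k).sum = i - k := by
          have h2 : k + (lam.parts.erase k).sum = i := by
            rw [← Multiset.sum_cons, Multiset.cons_erase ha, lam.parts_sum]
          omega
        have hcard : Multiset.card (lam.parts.erase k) = Multiset.card lam.parts - 1 :=
          Multiset.card_erase_of_mem ha
        have hle : Multiset.card lam.parts - 1 ≤ i - k := by
          rw [← hcard, ← hesum]
          exact card_le_sum _ fun x hx => lam.parts_pos (Multiset.mem_of_mem_erase hx)
        simp only [fA, fB, eraseSig, dif_pos ha]
        rw [hcard, Nat.cast_mul]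
        rw [← sign_eq (R := R) hk1 hki hl1 hle]
        ring
    -- Assemble
    rw [hstep1, Finset.sum_congr rfl hstep2, hRHS, hAB, ← Finset.sum_sigma]

end Stmt1Aux

/-- For a commutative ring `R`, `p ≥ 1`, `y : Fin p → R` and `1 ≤ i ≤ p`,
`i! · e_i(y) = ∑_{λ ⊢ i} (−1)^{i−ℓ(λ)} · (i!/∏_k k^{r_k} r_k!) · ∏_k (∑_j y_j^k)^{r_k}`,
where `λ = (1^{r_1} 2^{r_2} ⋯)` ranges over the partitions of `i`, `ℓ(λ)` is the number
of parts, `r_k = λ.parts.count k`, and `∏_k k^{r_k} = λ.parts.prod`.  The coefficient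
`i!/∏_k k^{r_k} r_k!` is an integer (the number of permutations with cycle type `λ`),
expressed here via exact natural-number division. -/
theorem stmt_1 {R : Type*} [CommRing R] (p : ℕ) (hp : 1 ≤ p) (y : Fin p → R)
    (i : ℕ) (hi1 : 1 ≤ i) (hip : i ≤ p) :
    (i.factorial : R) *
        ∑ J ∈ Finset.powersetCard i (Finset.univ : Finset (Fin p)), ∏ j ∈ J, y j =
      ∑ lam : Nat.Partition i,
        (-1 : R) ^ (i - Multiset.card lam.parts) *
          ((i.factorial /
              (lam.parts.prod *
                ∏ k ∈ lam.parts.toFinset, (lam.parts.count k).factorial) : ℕ) : R) *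
          ∏ k ∈ lam.parts.toFinset, (∑ j, y j ^ k) ^ lam.parts.count k := by
  refine (Stmt1Aux.main y i).trans ?_
  refine Finset.sum_congr rfl fun lam _ => ?_
  rw [Finset.prod_multiset_map_count]
  rfl
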